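/- arXiv:1104.2113 — 2 statements merged into one kernel-verified Lean document; each statement's English description precedes it below -/
import Mathlib

section
/- Expanding along the last row, the Izergin determinant satisfies: Z̆_N(v;w) = ∑_{j=1}^N Z̆_{N-1}(v_1,…,v_{N-1}; w_1,…,ŵ_j,…,w_N) · [γ] ∏_{k=1}^{N-1}[v_k-w_j+γ][v_k-w_j] · ∏_{k≠j}^N [v_N-w_k+γ][v_N-w_k] / ( ∏_{k=1}^{N-1}[v_k-v_N] ∏_{k≠j}^N [w_j-w_k] ), where ŵ_j denotes omission of w_j. -/
open Finset

/-- The Izergin function, in the determinant form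
`det([γ]∏_{k≠i}[v_k-w_j+γ][v_k-w_j]) / ∏_{i<j}[v_i-v_j][w_j-w_i]`. -/
noncomputable def izerginDet (γ : ℂ) {N : ℕ} (v w : Fin N → ℂ) : ℂ :=
  Matrix.det (Matrix.of fun i j : Fin N =>
      Complex.sinh γ *
        ∏ k ∈ Finset.univ.erase i, (Complex.sinh (v k - w j + γ) * Complex.sinh (v k - w j))) /
  ((∏ i, ∏ j ∈ Ioi i, Complex.sinh (v i - v j)) *
   (∏ i, ∏ j ∈ Ioi i, Complex.sinh (w j - w i)))


lemma map_succAboveEmb_univ {N : ℕ} (p : Fin (N+1)) :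
    Finset.map p.succAboveEmb Finset.univ = Finset.univ.erase p := by
  ext x
  simp only [Finset.mem_map, Finset.mem_erase, Finset.mem_univ, and_true, true_and,
    Fin.coe_succAboveEmb, Fin.exists_succAbove_eq_iff]

lemma prod_erase_univ' {N : ℕ} (p : Fin (N+1)) (f : Fin (N+1) → ℂ) :
    ∏ k ∈ Finset.univ.erase p, f k = ∏ k : Fin N, f (p.succAbove k) := by
  rw [← map_succAboveEmb_univ p, Finset.prod_map]
  rfl

lemma map_succAboveEmb_Ioi {N : ℕ} (p : Fin (N+1)) (i : Fin N) :
    Finset.map p.succAboveEmb (Ioi i) = (Ioi (p.succAbove i)).erase p := by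
  ext x
  simp only [Finset.mem_map, Finset.mem_Ioi, Finset.mem_erase, Fin.coe_succAboveEmb]
  constructor
  · rintro ⟨k, hk, rfl⟩
    exact ⟨Fin.succAbove_ne p k, Fin.succAbove_lt_succAbove_iff.2 hk⟩
  · rintro ⟨hx, hlt⟩
    obtain ⟨k, rfl⟩ := Fin.exists_succAbove_eq hx
    exact ⟨k, Fin.succAbove_lt_succAbove_iff.1 hlt, rfl⟩

lemma prod_Ioi_split {N : ℕ} (p : Fin (N+1)) (g : Fin (N+1) → Fin (N+1) → ℂ) :
    (∏ i, ∏ j ∈ Ioi i, g i j) =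
      ((∏ i : Fin N, ∏ j ∈ Ioi i, g (p.succAbove i) (p.succAbove j)) *
        ∏ k ∈ Ioi p, g p k) * ∏ k ∈ Iio p, g k p := by
  rw [← Finset.mul_prod_erase Finset.univ _ (Finset.mem_univ p),
    prod_erase_univ' p (fun i => ∏ j ∈ Ioi i, g i j)]
  have key : ∀ i : Fin N, (∏ j ∈ Ioi (p.succAbove i), g (p.succAbove i) j) =
      (∏ j ∈ Ioi i, g (p.succAbove i) (p.succAbove j)) *
        (if p.succAbove i < p then g (p.succAbove i) p else 1) := by
    intro i
    have hmap : ∏ j ∈ Ioi i, g (p.succAbove i) (p.succAbove j)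
        = ∏ x ∈ (Ioi (p.succAbove i)).erase p, g (p.succAbove i) x := by
      rw [← map_succAboveEmb_Ioi, Finset.prod_map]; rfl
    by_cases h : p.succAbove i < p
    · rw [if_pos h, hmap, Finset.prod_erase_mul _ _ (Finset.mem_Ioi.mpr h)]
    · rw [if_neg h, hmap, mul_one,
        Finset.erase_eq_of_notMem (by simp [h])]
  rw [Finset.prod_congr rfl (fun i _ => key i), Finset.prod_mul_distrib]
  have hIio : ∏ k ∈ Iio p, g k p
      = ∏ i : Fin N, (if p.succAbove i < p then g (p.succAbove i) p else 1) := by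
    rw [← prod_erase_univ' p (fun k => if k < p then g k p else 1), ← Finset.prod_filter]
    congr 1
    ext x
    simp only [Finset.mem_filter, Finset.mem_erase, Finset.mem_univ, and_true, Finset.mem_Iio]
    exact ⟨fun h => ⟨ne_of_lt h, h⟩, fun h => h.2⟩
  rw [hIio]; ring

lemma insert_map_succAboveEmb_erase {N : ℕ} (p : Fin (N+1)) (i : Fin N) :
    Finset.univ.erase (p.succAbove i)
      = insert p ((Finset.univ.erase i).map p.succAboveEmb) := by
  ext x
  simp only [Finset.mem_erase, Finset.mem_univ, and_true, Finset.mem_insert,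
    Finset.mem_map, Fin.coe_succAboveEmb]
  constructor
  · intro hx
    by_cases hxp : x = p
    · exact Or.inl hxp
    · obtain ⟨k, rfl⟩ := Fin.exists_succAbove_eq hxp
      exact Or.inr ⟨k, fun h => hx (by rw [h]), rfl⟩
  · rintro (rfl | ⟨k, hk, rfl⟩)
    · exact Fin.ne_succAbove _ i
    · exact fun h => hk (Fin.succAbove_right_injective h)

lemma prod_erase_succAbove {N : ℕ} (p : Fin (N+1)) (i : Fin N) (f : Fin (N+1) → ℂ) :
    ∏ k ∈ Finset.univ.erase (p.succAbove i), f k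
      = f p * ∏ k ∈ Finset.univ.erase i, f (p.succAbove k) := by
  rw [insert_map_succAboveEmb_erase, Finset.prod_insert (by
      simp only [Finset.mem_map, Fin.coe_succAboveEmb, not_exists]
      rintro k ⟨-, hk⟩
      exact Fin.succAbove_ne p k hk), Finset.prod_map]
  rfl

lemma Ioi_last_eq {N : ℕ} : Ioi (Fin.last N) = (∅ : Finset (Fin (N+1))) := by
  ext x
  simp only [Finset.mem_Ioi, Finset.notMem_empty, iff_false]
  exact not_lt.2 (Fin.le_last x)

lemma Iio_last_eq {N : ℕ} : Iio (Fin.last N) = Finset.univ.erase (Fin.last N) := by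
  ext x
  simp only [Finset.mem_Iio, Finset.mem_erase, Finset.mem_univ, and_true]
  exact ⟨ne_of_lt, fun h => lt_of_le_of_ne (Fin.le_last x) h⟩

lemma erase_eq_Iio_union_Ioi {N : ℕ} (j : Fin (N+1)) :
    Finset.univ.erase j = Iio j ∪ Ioi j := by
  ext x
  simp only [Finset.mem_erase, Finset.mem_univ, and_true, Finset.mem_union,
    Finset.mem_Iio, Finset.mem_Ioi]
  exact ⟨lt_or_gt_of_ne, fun h => h.elim ne_of_lt ne_of_gt⟩


set_option maxHeartbeats 1600000 in
/-- Expansion of the Izergin determinant along its last row. -/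
theorem izergin_laplace_expansion (γ : ℂ) {N : ℕ} (v w : Fin (N + 1) → ℂ)
    (hvv : ∀ i j, i ≠ j → Complex.sinh (v i - v j) ≠ 0)
    (hww : ∀ i j, i ≠ j → Complex.sinh (w i - w j) ≠ 0) :
    izerginDet γ v w =
      ∑ j : Fin (N + 1),
        izerginDet γ (v ∘ Fin.castSucc) (w ∘ j.succAbove) *
          (Complex.sinh γ *
            (∏ k : Fin N, Complex.sinh (v k.castSucc - w j + γ) *
              Complex.sinh (v k.castSucc - w j)) *
            ∏ k ∈ Finset.univ.erase j, Complex.sinh (v (Fin.last N) - w k + γ) *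
              Complex.sinh (v (Fin.last N) - w k)) /
          ((∏ k : Fin N, Complex.sinh (v k.castSucc - v (Fin.last N))) *
            ∏ k ∈ Finset.univ.erase j, Complex.sinh (w j - w k)) := by
  classical
  -- denominator factorization for `v`
  have hΔv : (∏ i, ∏ j ∈ Ioi i, Complex.sinh (v i - v j))
      = (∏ i : Fin N, ∏ j ∈ Ioi i, Complex.sinh (v i.castSucc - v j.castSucc)) *
        (∏ k : Fin N, Complex.sinh (v k.castSucc - v (Fin.last N))) := by
    rw [prod_Ioi_split (Fin.last N) (fun i j => Complex.sinh (v i - v j)), Ioi_last_eq,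
      Finset.prod_empty, mul_one, Iio_last_eq,
      prod_erase_univ' (Fin.last N) (fun k => Complex.sinh (v k - v (Fin.last N)))]
    simp only [Fin.succAbove_last]
  -- denominator factorization for `w`
  have hΔw : ∀ j : Fin (N+1), (∏ i, ∏ k ∈ Ioi i, Complex.sinh (w k - w i))
      = (∏ i : Fin N, ∏ k ∈ Ioi i, Complex.sinh (w (j.succAbove k) - w (j.succAbove i))) *
        ((-1) ^ (N - (j : ℕ)) *
          ∏ k ∈ Finset.univ.erase j, Complex.sinh (w j - w k)) := by
    intro j
    rw [prod_Ioi_split j (fun i k => Complex.sinh (w k - w i))]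
    have h1 : ∏ k ∈ Ioi j, Complex.sinh (w k - w j)
        = (-1) ^ (N - (j : ℕ)) * ∏ k ∈ Ioi j, Complex.sinh (w j - w k) := by
      have hcong : ∀ k ∈ Ioi j, Complex.sinh (w k - w j)
          = -1 * Complex.sinh (w j - w k) := by
        intro k _
        rw [show w k - w j = -(w j - w k) by ring, Complex.sinh_neg]; ring
      rw [Finset.prod_congr rfl hcong, Finset.prod_mul_distrib, Finset.prod_const]
      congr 2
      rw [Fin.card_Ioi]
      omega
    have h2 : ∏ k ∈ Finset.univ.erase j, Complex.sinh (w j - w k)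
        = (∏ k ∈ Iio j, Complex.sinh (w j - w k)) *
          ∏ k ∈ Ioi j, Complex.sinh (w j - w k) := by
      rw [erase_eq_Iio_union_Ioi, Finset.prod_union
        (Finset.disjoint_left.2 fun x hx hx' =>
          absurd (Finset.mem_Ioi.1 hx') (not_lt.2 (le_of_lt (Finset.mem_Iio.1 hx))))]
    rw [h1, h2]; ring
  -- nonvanishing facts
  have ha : (∏ i : Fin N, ∏ j ∈ Ioi i, Complex.sinh (v i.castSucc - v j.castSucc)) ≠ 0 := by
    rw [Finset.prod_ne_zero_iff]
    intro i _
    rw [Finset.prod_ne_zero_iff]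
    intro k hk
    exact hvv _ _ (fun h => absurd (Fin.castSucc_injective _ h)
      (ne_of_lt (Finset.mem_Ioi.1 hk)))
  have hc : (∏ k : Fin N, Complex.sinh (v k.castSucc - v (Fin.last N))) ≠ 0 := by
    rw [Finset.prod_ne_zero_iff]
    intro k _
    exact hvv _ _ (ne_of_lt (Fin.castSucc_lt_last k))
  have hb : ∀ j : Fin (N+1),
      (∏ i : Fin N, ∏ k ∈ Ioi i, Complex.sinh (w (j.succAbove k) - w (j.succAbove i))) ≠ 0 := by
    intro j
    rw [Finset.prod_ne_zero_iff]
    intro i _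
    rw [Finset.prod_ne_zero_iff]
    intro k hk
    exact hww _ _ (fun h => absurd (Fin.succAbove_right_injective h)
      (ne_of_gt (Finset.mem_Ioi.1 hk)))
  have hd : ∀ j : Fin (N+1),
      (∏ k ∈ Finset.univ.erase j, Complex.sinh (w j - w k)) ≠ 0 := by
    intro j
    rw [Finset.prod_ne_zero_iff]
    intro k hk
    exact hww _ _ (Ne.symm (Finset.mem_erase.1 hk).1)
  -- Laplace expansion of the determinant along the last row
  rw [izerginDet, Matrix.det_succ_row _ (Fin.last N), Finset.sum_div]
  refine Finset.sum_congr rfl fun j _ => ?_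
  -- the last-row entry
  have hentry : (Matrix.of fun i j : Fin (N+1) => Complex.sinh γ *
        ∏ k ∈ Finset.univ.erase i,
          (Complex.sinh (v k - w j + γ) * Complex.sinh (v k - w j))) (Fin.last N) j
      = Complex.sinh γ * ∏ k : Fin N,
          (Complex.sinh (v k.castSucc - w j + γ) * Complex.sinh (v k.castSucc - w j)) := by
    simp only [Matrix.of_apply]
    rw [prod_erase_univ' (Fin.last N)
      (fun k => Complex.sinh (v k - w j + γ) * Complex.sinh (v k - w j))]
    simp only [Fin.succAbove_last]
  -- the minor
  have hsub : ((Matrix.of fun i j : Fin (N+1) => Complex.sinh γ *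
        ∏ k ∈ Finset.univ.erase i,
          (Complex.sinh (v k - w j + γ) * Complex.sinh (v k - w j))).submatrix
        (Fin.last N).succAbove j.succAbove)
      = Matrix.of (fun i' j' : Fin N =>
          (Complex.sinh (v (Fin.last N) - w (j.succAbove j') + γ) *
            Complex.sinh (v (Fin.last N) - w (j.succAbove j'))) *
          (Matrix.of fun i j'' : Fin N => Complex.sinh γ *
            ∏ k ∈ Finset.univ.erase i,
              (Complex.sinh ((v ∘ Fin.castSucc) k - (w ∘ j.succAbove) j'' + γ) *
                Complex.sinh ((v ∘ Fin.castSucc) k - (w ∘ j.succAbove) j''))) i' j') := by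
    ext i' j'
    simp only [Matrix.submatrix_apply, Matrix.of_apply, Function.comp_apply]
    rw [prod_erase_succAbove (Fin.last N) i'
      (fun k => Complex.sinh (v k - w (j.succAbove j') + γ) *
        Complex.sinh (v k - w (j.succAbove j')))]
    simp only [Fin.succAbove_last]
    ring
  rw [hentry, hsub, Matrix.det_mul_row]
  have hf : (∏ j' : Fin N, (Complex.sinh (v (Fin.last N) - w (j.succAbove j') + γ) *
        Complex.sinh (v (Fin.last N) - w (j.succAbove j'))))
      = ∏ k ∈ Finset.univ.erase j,
          (Complex.sinh (v (Fin.last N) - w k + γ) * Complex.sinh (v (Fin.last N) - w k)) := by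
    rw [prod_erase_univ' j
      (fun k => Complex.sinh (v (Fin.last N) - w k + γ) * Complex.sinh (v (Fin.last N) - w k))]
  rw [hf]
  -- unfold the smaller Izergin determinant
  rw [show izerginDet γ (v ∘ Fin.castSucc) (w ∘ j.succAbove)
      = Matrix.det (Matrix.of fun i j'' : Fin N => Complex.sinh γ *
          ∏ k ∈ Finset.univ.erase i,
            (Complex.sinh ((v ∘ Fin.castSucc) k - (w ∘ j.succAbove) j'' + γ) *
              Complex.sinh ((v ∘ Fin.castSucc) k - (w ∘ j.succAbove) j''))) /
        ((∏ i : Fin N, ∏ j' ∈ Ioi i, Complex.sinh (v i.castSucc - v j'.castSucc)) *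
          (∏ i : Fin N, ∏ k ∈ Ioi i,
            Complex.sinh (w (j.succAbove k) - w (j.succAbove i)))) from by
    simp only [izerginDet, Function.comp_apply]]
  rw [hΔv, hΔw j, Fin.val_last]
  have hj : (j : ℕ) ≤ N := Fin.is_le j
  have hsign : ((-1 : ℂ)) ^ (N + (j : ℕ)) = (-1) ^ (N - (j : ℕ)) := by
    rw [show N + (j : ℕ) = (N - (j : ℕ)) + 2 * (j : ℕ) by omega, pow_add, pow_mul,
      neg_one_sq, one_pow, mul_one]
  rw [hsign]
  have hsgn : ((-1 : ℂ)) ^ (N - (j : ℕ)) ≠ 0 := pow_ne_zero _ (by norm_num)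
  field_simp
end

section
/- The determinant expression S_n = ∏_{i=1}^N ∏_{j=1}^M [v_i-w_j] · det M_n / ( ∏_{i=1}^n ∏_{j=1}^{N-n} [u_i-w_j] · ∏_{1≤i<j≤n}[u_i-u_j] · ∏_{1≤i<j≤N}[v_i-v_j] · ∏_{1≤i<j≤N-n}[w_j-w_i] ) satisfies the recursion: setting u_n = w_{N-n+1} gives S_n = ∏_{i=1}^M [w_{N-n+1}-w_i+γ] · S_{n-1}, where S_{n-1} is the same formula with n replaced by n-1. -/
open Finset

lemma Ioi_castSucc_eq {n : ℕ} (i : Fin n) :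
    Ioi (Fin.castSucc i) = insert (Fin.last n) ((Ioi i).map Fin.castSuccEmb) := by
  ext j
  rcases Fin.eq_castSucc_or_eq_last j with ⟨k, rfl⟩ | rfl
  · simp only [mem_Ioi, Fin.castSucc_lt_castSucc_iff, mem_insert,
      (Fin.castSucc_lt_last k).ne, false_or, mem_map]
    constructor
    · intro h; exact ⟨k, h, rfl⟩
    · rintro ⟨a, ha, h⟩
      have hak : (a : ℕ) = (k : ℕ) := by
        have := congrArg Fin.val h
        simpa [Fin.castSuccEmb] using this
      have : a = k := Fin.ext hak
      subst this; exact ha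
  · refine ⟨fun _ => by simp, fun _ => mem_Ioi.mpr (Fin.castSucc_lt_last i)⟩

lemma Ioi_last_empty {n : ℕ} : Ioi (Fin.last n) = ∅ := by
  ext j
  simp only [mem_Ioi, notMem_empty, iff_false]
  exact not_lt.mpr (Fin.le_last j)

lemma prod_Ioi_split_s11 {n : ℕ} (f : Fin (n+1) → Fin (n+1) → ℂ) :
    ∏ i, ∏ j ∈ Ioi i, f i j =
      (∏ i : Fin n, ∏ j ∈ Ioi i, f i.castSucc j.castSucc) *
        ∏ i : Fin n, f i.castSucc (Fin.last n) := by
  rw [Fin.prod_univ_castSucc]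
  rw [Ioi_last_empty, prod_empty, mul_one]
  simp only [Ioi_castSucc_eq]
  rw [← prod_mul_distrib]
  refine Finset.prod_congr rfl fun i _ => ?_
  have hnot : Fin.last n ∉ (Ioi i).map Fin.castSuccEmb := by
    simp only [mem_map, not_exists]
    rintro a ⟨_, ha⟩
    exact absurd ha (Fin.castSucc_lt_last a).ne
  rw [Finset.prod_insert hnot, Finset.prod_map, mul_comm]
  rfl

lemma prod_fin_congr {a b : ℕ} (h : a = b) (f : Fin a → ℂ) (g : Fin b → ℂ)
    (hfg : ∀ j : Fin a, f j = g (Fin.cast h j)) : ∏ j, f j = ∏ j, g j := by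
  subst h; exact Finset.prod_congr rfl fun j _ => hfg j

lemma prod_Ioi_congr {a b : ℕ} (h : a = b) (f : Fin a → Fin a → ℂ) (g : Fin b → Fin b → ℂ)
    (hfg : ∀ i j : Fin a, f i j = g (Fin.cast h i) (Fin.cast h j)) :
    ∏ i, ∏ j ∈ Ioi i, f i j = ∏ i, ∏ j ∈ Ioi i, g i j := by
  subst h
  exact Finset.prod_congr rfl fun i _ => Finset.prod_congr rfl fun j _ => hfg i j

lemma denom_aux {m t : ℕ} (su : Fin (m+1) → ℂ) (sw : Fin (t+1) → ℂ)
    (husw : su (Fin.last m) = sw (Fin.last t)) (V : ℂ)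
    (F : ℂ → ℂ → ℂ) :
    (∏ i, ∏ j : Fin t, F (su i) (sw j.castSucc)) *
    (∏ i, ∏ j ∈ Ioi i, F (su i) (su j)) * V *
    (∏ i : Fin t, ∏ j ∈ Ioi i, F (sw j.castSucc) (sw i.castSucc))
    =
    (∏ i : Fin m, ∏ j, F (su i.castSucc) (sw j)) *
    (∏ i : Fin m, ∏ j ∈ Ioi i, F (su i.castSucc) (su j.castSucc)) * V *
    (∏ i, ∏ j ∈ Ioi i, F (sw j) (sw i)) := by
  have h1 : ∀ i : Fin m, ∏ j : Fin (t+1), F (su i.castSucc) (sw j)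
      = (∏ j : Fin t, F (su i.castSucc) (sw j.castSucc)) * F (su i.castSucc) (sw (Fin.last t)) :=
    fun i => Fin.prod_univ_castSucc _
  rw [prod_Ioi_split_s11 (fun i j => F (su i) (su j)),
      prod_Ioi_split_s11 (fun i j => F (sw j) (sw i)),
      Fin.prod_univ_castSucc (f := fun i => ∏ j : Fin t, F (su i) (sw j.castSucc)),
      Finset.prod_congr rfl (fun i _ => h1 i), prod_mul_distrib]
  simp only [husw]
  ring

/-- The function `f_i(x) = ([γ]/[v_i-x]) ∏_{k≠i} [v_k-x+γ]`. -/
noncomputable def fXXZ (γ : ℂ) {N : ℕ} (v : Fin N → ℂ) (i : Fin N) (x : ℂ) : ℂ :=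
  Complex.sinh γ / Complex.sinh (v i - x) *
    ∏ k ∈ Finset.univ.erase i, Complex.sinh (v k - x + γ)

/-- The function
`g_i(u) = ([γ]/[v_i-u]) (∏_{k≠i}[v_k-u+γ]∏_k[u-w_k+γ] − ∏_{k≠i}[v_k-u-γ]∏_k[u-w_k])`. -/
noncomputable def gXXZ (γ : ℂ) {N M : ℕ} (v : Fin N → ℂ) (w : Fin M → ℂ)
    (i : Fin N) (x : ℂ) : ℂ :=
  Complex.sinh γ / Complex.sinh (v i - x) *
    ((∏ k ∈ Finset.univ.erase i, Complex.sinh (v k - x + γ)) *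
      (∏ k, Complex.sinh (x - w k + γ)) -
     (∏ k ∈ Finset.univ.erase i, Complex.sinh (v k - x - γ)) *
      (∏ k, Complex.sinh (x - w k)))

/-- The determinant expression for the intermediate Bethe scalar product `S_n`:
`S_n = ∏_{i,j}[v_i-w_j]·det M_n / (∏∏[u_i-w_j]·∏[u_i-u_j]·∏[v_i-v_j]·∏[w_j-w_i])`,
where the `N×N` matrix `M_n` has columns `f(w_1),…,f(w_{N-n}),g(u_n),…,g(u_1)`. -/
noncomputable def SXXZ (γ : ℂ) {N M n : ℕ} (v : Fin N → ℂ) (w : Fin M → ℂ)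
    (u : Fin n → ℂ) (hn : n ≤ N) (hNM : N ≤ M) : ℂ :=
  (∏ i, ∏ j, Complex.sinh (v i - w j)) *
    Matrix.det (Matrix.of fun i j : Fin N =>
      if h : (j : ℕ) < N - n then
        fXXZ γ v i (w ⟨j, by have := j.isLt; omega⟩)
      else
        gXXZ γ v w i (u ⟨N - 1 - (j : ℕ), by have := j.isLt; omega⟩)) /
  ((∏ i : Fin n, ∏ j : Fin (N - n),
      Complex.sinh (u i - w ⟨j, by have := j.isLt; omega⟩)) *
   (∏ i : Fin n, ∏ j ∈ Ioi i, Complex.sinh (u i - u j)) *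
   (∏ i : Fin N, ∏ j ∈ Ioi i, Complex.sinh (v i - v j)) *
   (∏ i : Fin (N - n), ∏ j ∈ Ioi i,
      Complex.sinh (w ⟨j, by have := j.isLt; omega⟩ - w ⟨i, by have := i.isLt; omega⟩)))

/-- The recursion for the Bethe scalar product determinant expression: setting
`u_n = w_{Ñ+1}` (with `Ñ = N - n`) gives `S_n = ∏_{i=1}^M [w_{Ñ+1}-w_i+γ]·S_{n-1}`. -/
theorem sXXZ_recursion (γ : ℂ) {m N M : ℕ} (hm : m + 1 ≤ N) (hNM : N ≤ M)
    (v : Fin N → ℂ) (w : Fin M → ℂ) (u : Fin (m + 1) → ℂ)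
    (hu : u (Fin.last m) = w ⟨N - (m + 1), by omega⟩)
    (hvw : ∀ i j, Complex.sinh (v i - w j) ≠ 0)
    (hvu : ∀ i j, Complex.sinh (v i - u j) ≠ 0)
    (hvv : ∀ i j, i ≠ j → Complex.sinh (v i - v j) ≠ 0)
    (huu : ∀ i j : Fin (m + 1), i ≠ j → Complex.sinh (u i - u j) ≠ 0)
    (hww : ∀ i j : Fin M, i ≠ j → (i : ℕ) < N - m → (j : ℕ) < N - m →
      Complex.sinh (w i - w j) ≠ 0)
    (huw : ∀ (i : Fin (m + 1)) (j : Fin M),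
      ((j : ℕ) < N - (m + 1) ∨ ((i : ℕ) < m ∧ (j : ℕ) < N - m)) →
      Complex.sinh (u i - w j) ≠ 0) :
    SXXZ γ v w u hm hNM =
      (∏ i, Complex.sinh (w ⟨N - (m + 1), by omega⟩ - w i + γ)) *
        SXXZ γ v w (u ∘ Fin.castSucc) (by omega) hNM := by
  have htN : N - (m + 1) < N := by omega
  have htM : N - (m + 1) < M := by omega
  have hNm : N - m = (N - (m + 1)) + 1 := by omega
  unfold SXXZ
  -- the determinant identity
  have hdet :
      (Matrix.of fun i j : Fin N =>
        if h : (j : ℕ) < N - (m + 1) then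
          fXXZ γ v i (w ⟨j, by have := j.isLt; omega⟩)
        else
          gXXZ γ v w i (u ⟨N - 1 - (j : ℕ), by have := j.isLt; omega⟩)).det
      = (∏ i, Complex.sinh (w ⟨N - (m + 1), htM⟩ - w i + γ)) *
        (Matrix.of fun i j : Fin N =>
          if h : (j : ℕ) < N - m then
            fXXZ γ v i (w ⟨j, by have := j.isLt; omega⟩)
          else
            gXXZ γ v w i ((u ∘ Fin.castSucc) ⟨N - 1 - (j : ℕ), by have := j.isLt; omega⟩)).det := by
    set B := Matrix.of (fun i j : Fin N =>
        if h : (j : ℕ) < N - m then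
          fXXZ γ v i (w ⟨j, by have := j.isLt; omega⟩)
        else
          gXXZ γ v w i ((u ∘ Fin.castSucc) ⟨N - 1 - (j : ℕ), by have := j.isLt; omega⟩)) with hB
    have hAB : (Matrix.of fun i j : Fin N =>
        if h : (j : ℕ) < N - (m + 1) then
          fXXZ γ v i (w ⟨j, by have := j.isLt; omega⟩)
        else
          gXXZ γ v w i (u ⟨N - 1 - (j : ℕ), by have := j.isLt; omega⟩))
        = B.updateCol ⟨N - (m + 1), htN⟩
            ((∏ i, Complex.sinh (w ⟨N - (m + 1), htM⟩ - w i + γ)) •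
              fun i => B i ⟨N - (m + 1), htN⟩) := by
      ext i j
      rw [Matrix.updateCol_apply]
      by_cases hj : j = ⟨N - (m + 1), htN⟩
      · subst hj
        simp only [if_pos rfl, Pi.smul_apply, smul_eq_mul, Matrix.of_apply, hB]
        rw [dif_neg (show ¬ ((⟨N - (m+1), htN⟩ : Fin N) : ℕ) < N - (m + 1) by
              show ¬ N - (m+1) < N - (m+1); omega),
            dif_pos (show ((⟨N - (m+1), htN⟩ : Fin N) : ℕ) < N - m by
              show N - (m+1) < N - m; omega)]
        have hue : u ⟨N - 1 - ((⟨N - (m+1), htN⟩ : Fin N) : ℕ),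
              by show N - 1 - (N - (m+1)) < m + 1; omega⟩
            = w ⟨N - (m + 1), htM⟩ := by
          rw [show (⟨N - 1 - ((⟨N - (m+1), htN⟩ : Fin N) : ℕ),
              by show N - 1 - (N - (m+1)) < m + 1; omega⟩ : Fin (m+1))
              = Fin.last m from Fin.ext (by show N - 1 - (N - (m+1)) = m; omega), hu]
        rw [hue]
        show gXXZ γ v w i (w ⟨N - (m + 1), htM⟩)
          = _ * fXXZ γ v i (w ⟨N - (m+1), htM⟩)
        unfold gXXZ fXXZ
        rw [Finset.prod_eq_zero (f := fun k => Complex.sinh (w ⟨N - (m+1), htM⟩ - w k))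
          (Finset.mem_univ (⟨N - (m+1), htM⟩ : Fin M)) (by simp)]
        ring
      · rw [if_neg hj]
        simp only [Matrix.of_apply, hB]
        have hjv : (j : ℕ) ≠ N - (m + 1) := fun h => hj (Fin.ext h)
        by_cases hlt : (j : ℕ) < N - (m + 1)
        · rw [dif_pos hlt, dif_pos (by omega)]
        · rw [dif_neg hlt, dif_neg (by omega)]
          rfl
    rw [hAB, Matrix.det_updateCol_smul, Matrix.updateCol_eq_self]
  -- the denominator identity
  have hden :
      (∏ i : Fin (m+1), ∏ j : Fin (N - (m+1)),
          Complex.sinh (u i - w ⟨j, by have := j.isLt; omega⟩)) *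
      (∏ i : Fin (m+1), ∏ j ∈ Ioi i, Complex.sinh (u i - u j)) *
      (∏ i : Fin N, ∏ j ∈ Ioi i, Complex.sinh (v i - v j)) *
      (∏ i : Fin (N - (m+1)), ∏ j ∈ Ioi i,
          Complex.sinh (w ⟨j, by have := j.isLt; omega⟩ - w ⟨i, by have := i.isLt; omega⟩))
      =
      (∏ i : Fin m, ∏ j : Fin (N - m),
          Complex.sinh ((u ∘ Fin.castSucc) i - w ⟨j, by have := j.isLt; omega⟩)) *
      (∏ i : Fin m, ∏ j ∈ Ioi i,
          Complex.sinh ((u ∘ Fin.castSucc) i - (u ∘ Fin.castSucc) j)) *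
      (∏ i : Fin N, ∏ j ∈ Ioi i, Complex.sinh (v i - v j)) *
      (∏ i : Fin (N - m), ∏ j ∈ Ioi i,
          Complex.sinh (w ⟨j, by have := j.isLt; omega⟩ - w ⟨i, by have := i.isLt; omega⟩)) := by
    have key := denom_aux (t := N - (m+1)) u
      (fun j => w ⟨j, by have := j.isLt; omega⟩)
      (by rw [hu]; rfl) (∏ i : Fin N, ∏ j ∈ Ioi i, Complex.sinh (v i - v j))
      (fun a b => Complex.sinh (a - b))
    refine Eq.trans (by exact key) ?_
    congr 1
    · congr 1
      · congr 1
        · exact Finset.prod_congr rfl fun i _ => (prod_fin_congr hNm _ _ fun j => rfl).symm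
    · exact (prod_Ioi_congr hNm _ _ fun i j => rfl).symm
  rw [hdet, hden]
  ring
end
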